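/- Let A ∈ ℝ^{m×N} with rank(A) = m, y ∈ ℝ^m, p ≥ 2 and α > 0. Then the maximizer over 𝒰(A,y) of H (if p = 2), respectively of ‖·‖_{2/p} (if p > 2), exists and is unique, and it equals g*, the unique minimizer of G_p over 𝒰(A,y). In particular 𝒲_p(A,y) = g*. -/

import Mathlib

noncomputable section

/-- The Euclidean (ℓ²) norm of a vector in ℝⁿ. -/
def norm2 {n : ℕ} (v : Fin n → ℝ) : ℝ := Real.sqrt (∑ i, v i ^ 2)

/-- The ℓ¹ norm of a vector in ℝⁿ. -/
def norm1 {n : ℕ} (v : Fin n → ℝ) : ℝ := ∑ i, |v i|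

/-- The sup (ℓ^∞) norm of a vector in ℝⁿ. -/
def normInf {n : ℕ} (v : Fin n → ℝ) : ℝ := ⨆ i, |v i|

/-- The ℓʳ (quasi-)norm ‖v‖_r = (∑ |v i|^r)^(1/r). -/
def normr {n : ℕ} (r : ℝ) (v : Fin n → ℝ) : ℝ := (∑ i, |v i| ^ r) ^ (1 / r)

/-- The smallest singular value of `A`, via `σ_min(A) = inf {‖Aᵀ z‖₂ : ‖z‖₂ = 1}`. -/
def sigmaMin {m N : ℕ} (A : Matrix (Fin m) (Fin N) ℝ) : ℝ :=
  sInf {c : ℝ | ∃ z : Fin m → ℝ, norm2 z = 1 ∧ c = norm2 (A.transpose.mulVec z)}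

/-- The entropy H(z) = −∑ |z i| ln |z i| (with the convention 0 · ln 0 = 0,
which holds automatically since `Real.log 0 = 0`). -/
def Hent {n : ℕ} (z : Fin n → ℝ) : ℝ := -∑ i, |z i| * Real.log |z i|

/-- The set 𝒰(A,y) of basis-pursuit minimizers: minimizers of ‖·‖₁ subject to Az = y. -/
def BPset {m N : ℕ} (A : Matrix (Fin m) (Fin N) ℝ) (y : Fin m → ℝ) : Set (Fin N → ℝ) :=
  {z | A.mulVec z = y ∧ ∀ w : Fin N → ℝ, A.mulVec w = y → norm1 z ≤ norm1 w}

/-- The basis-pursuit minimum value R(A,y) = min {‖z‖₁ : Az = y}. -/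
def Rmin {m N : ℕ} (A : Matrix (Fin m) (Fin N) ℝ) (y : Fin m → ℝ) : ℝ :=
  sInf (norm1 '' {z : Fin N → ℝ | A.mulVec z = y})

/-- The function h_p: h₂(t) = 2 sinh t, and for p > 2,
h_p(t) = (1−t)^{−p/(p−2)} − (1+t)^{−p/(p−2)}. -/
def hfun (p t : ℝ) : ℝ :=
  if p = 2 then 2 * Real.sinh t
  else (1 - t) ^ (-(p / (p - 2))) - (1 + t) ^ (-(p / (p - 2)))

/-- The natural domain of h_p: all of ℝ when p = 2, and (−1,1) when p > 2. -/
def hDomain (p : ℝ) : Set ℝ := if p = 2 then Set.univ else Set.Ioo (-1) 1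

/-- The inverse h_p^{-1} : ℝ → ℝ of h_p (h_p is a strictly increasing bijection
from its domain onto ℝ). -/
def hInv (p u : ℝ) : ℝ := Function.invFunOn (hfun p) (hDomain p) u

/-- q_p(u) = ∫₀ᵘ h_p^{−1}(v) dv. -/
def qfun (p u : ℝ) : ℝ := ∫ v in (0:ℝ)..u, hInv p v

/-- Q_p(z) = α^p ∑ q_p(z i / α^p). -/
def Qfun {n : ℕ} (p α : ℝ) (z : Fin n → ℝ) : ℝ := α ^ p * ∑ i, qfun p (z i / α ^ p)

/-- g_p: g₂(u) = |u| ln(|u|/e) (with g₂(0) = 0), and for p > 2,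
g_p(u) = |u| − (p/2)|u|^{2/p}. -/
def gfun (p u : ℝ) : ℝ :=
  if p = 2 then (if u = 0 then 0 else |u| * Real.log (|u| / Real.exp 1))
  else |u| - p / 2 * |u| ^ (2 / p)

/-- G_p(z) = α^p ∑ g_p(z i / α^p). -/
def Gfun {n : ℕ} (p α : ℝ) (z : Fin n → ℝ) : ℝ := α ^ p * ∑ i, gfun p (z i / α ^ p)

/-- The predictor ψ_θ = θ₊^p − θ₋^p (componentwise powers), for a parameter vector
θ = (θ₊, θ₋) ∈ ℝ^{2N}. -/
def psiOf {N : ℕ} (p : ℝ) (θ : EuclideanSpace ℝ (Fin N ⊕ Fin N)) : Fin N → ℝ :=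
  fun i => θ (Sum.inl i) ^ p - θ (Sum.inr i) ^ p

/-- The squared loss L(θ) = (1/2)‖A ψ_θ − y‖₂². -/
def lossFun {m N : ℕ} (A : Matrix (Fin m) (Fin N) ℝ) (y : Fin m → ℝ) (p : ℝ)
    (θ : EuclideanSpace ℝ (Fin N ⊕ Fin N)) : ℝ :=
  (1 / 2) * ∑ j, (A.mulVec (psiOf p θ) j - y j) ^ 2

end

section Aux

variable {m N : ℕ}

lemma norm1_eq_of_mem {A : Matrix (Fin m) (Fin N) ℝ} {y : Fin m → ℝ}
    {z w : Fin N → ℝ} (hz : z ∈ BPset A y) (hw : w ∈ BPset A y) :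
    norm1 z = norm1 w :=
  le_antisymm (hz.2 w hw.1) (hw.2 z hz.1)

lemma midpoint_bp {A : Matrix (Fin m) (Fin N) ℝ} {y : Fin m → ℝ}
    {z w : Fin N → ℝ} (hz : z ∈ BPset A y) (hw : w ∈ BPset A y) :
    (fun i => (z i + w i) / 2) ∈ BPset A y ∧ ∀ i, |z i + w i| = |z i| + |w i| := by
  set v : Fin N → ℝ := fun i => (z i + w i) / 2 with hv
  have hveq : v = (2 : ℝ)⁻¹ • (z + w) := by
    funext i; simp [hv, div_eq_inv_mul]
  have hAv : A.mulVec v = y := by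
    rw [hveq, Matrix.mulVec_smul, Matrix.mulVec_add, hz.1, hw.1]
    funext j; simp; ring
  have hnorm1zw : norm1 z = norm1 w := norm1_eq_of_mem hz hw
  have hterm : ∀ i ∈ (Finset.univ : Finset (Fin N)), |v i| ≤ (|z i| + |w i|) / 2 := by
    intro i _
    have := abs_add_le (z i) (w i)
    simp only [hv]
    rw [abs_div, abs_two]
    linarith
  have hhalf : ∑ i, (|z i| + |w i|) / 2 = norm1 z := by
    rw [← Finset.sum_div, Finset.sum_add_distrib]
    show (norm1 z + norm1 w) / 2 = norm1 z
    rw [hnorm1zw]; ring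
  have hle : norm1 v ≤ norm1 z := hhalf ▸ Finset.sum_le_sum hterm
  have heq : norm1 v = norm1 z := le_antisymm hle (hz.2 v hAv)
  have hzero : ∀ i ∈ (Finset.univ : Finset (Fin N)), (|z i| + |w i|) / 2 - |v i| = 0 := by
    apply (Finset.sum_eq_zero_iff_of_nonneg ?_).1
    · rw [Finset.sum_sub_distrib, hhalf]
      show norm1 z - norm1 v = 0
      rw [heq]; ring
    · intro i _
      have := hterm i (Finset.mem_univ i)
      linarith
  have hbp : v ∈ BPset A y := ⟨hAv, fun u hu => heq ▸ hz.2 u hu⟩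
  refine ⟨hbp, fun i => ?_⟩
  have h0 := hzero i (Finset.mem_univ i)
  have h1 : |v i| = |z i + w i| / 2 := by simp only [hv]; rw [abs_div, abs_two]
  rw [h1] at h0
  linarith

/-- Key uniqueness lemma: for a strictly concave `φ` on `[0,∞)`, a maximizer of
`z ↦ ∑ φ |z i|` over `BPset A y` is unique. -/
lemma uniq_max {A : Matrix (Fin m) (Fin N) ℝ} {y : Fin m → ℝ}
    {φ : ℝ → ℝ} (hφ : StrictConcaveOn ℝ (Set.Ici (0:ℝ)) φ)
    {g : Fin N → ℝ} (hg1 : g ∈ BPset A y)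
    (hmax : ∀ z ∈ BPset A y, (∑ i, φ |z i|) ≤ ∑ i, φ |g i|) :
    ∃! w : Fin N → ℝ, w ∈ BPset A y ∧ ∀ z ∈ BPset A y, (∑ i, φ |z i|) ≤ ∑ i, φ |w i| := by
  refine ⟨g, ⟨hg1, hmax⟩, ?_⟩
  rintro w ⟨hw1, hwmax⟩
  by_contra hne
  obtain ⟨hbp, habs⟩ := midpoint_bp hw1 hg1
  set v : Fin N → ℝ := fun i => (w i + g i) / 2 with hv
  have hvabs : ∀ i, |v i| = (|w i| + |g i|) / 2 := by
    intro i
    simp only [hv]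
    rw [abs_div, abs_two, habs i]
  -- pick an index where |w i| ≠ |g i|
  obtain ⟨i₀, hi₀⟩ : ∃ i, w i ≠ g i := by
    by_contra h
    push_neg at h
    exact hne (funext h)
  have hi₀' : |w i₀| ≠ |g i₀| := by
    intro h
    rcases abs_eq_abs.1 h with h' | h'
    · exact hi₀ h'
    · have h2 := habs i₀
      rw [h', abs_neg, neg_add_cancel, abs_zero] at h2
      have h3 : g i₀ = 0 := abs_eq_zero.1 (by linarith)
      exact hi₀ (by rw [h', h3, neg_zero])
  -- value comparison
  have hFwg : (∑ i, φ |w i|) = ∑ i, φ |g i| :=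
    le_antisymm (hmax w hw1) (hwmax g hg1)
  have hconcave : ∀ i ∈ (Finset.univ : Finset (Fin N)),
      (φ |w i| + φ |g i|) / 2 ≤ φ |v i| := by
    intro i _
    rw [hvabs i]
    rcases eq_or_ne (|w i|) (|g i|) with h | h
    · rw [h]; ring_nf; exact le_of_eq rfl
    · have := hφ.2 (Set.mem_Ici.2 (abs_nonneg (w i))) (Set.mem_Ici.2 (abs_nonneg (g i)))
        h (by norm_num : (0:ℝ) < 1/2) (by norm_num : (0:ℝ) < 1/2) (by norm_num)
      simp only [smul_eq_mul] at this
      have h2 : (1:ℝ)/2 * |w i| + 1/2 * |g i| = (|w i| + |g i|) / 2 := by ring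
      rw [h2] at this
      linarith
  have hstrict : (φ |w i₀| + φ |g i₀|) / 2 < φ |v i₀| := by
    rw [hvabs i₀]
    have := hφ.2 (Set.mem_Ici.2 (abs_nonneg (w i₀))) (Set.mem_Ici.2 (abs_nonneg (g i₀)))
      hi₀' (by norm_num : (0:ℝ) < 1/2) (by norm_num : (0:ℝ) < 1/2) (by norm_num)
    simp only [smul_eq_mul] at this
    have h2 : (1:ℝ)/2 * |w i₀| + 1/2 * |g i₀| = (|w i₀| + |g i₀|) / 2 := by ring
    rw [h2] at this
    linarith
  have hsum : (∑ i, (φ |w i| + φ |g i|) / 2) < ∑ i, φ |v i| :=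
    Finset.sum_lt_sum hconcave ⟨i₀, Finset.mem_univ i₀, hstrict⟩
  have hsum2 : (∑ i, (φ |w i| + φ |g i|) / 2) = ∑ i, φ |g i| := by
    rw [← Finset.sum_div, Finset.sum_add_distrib, hFwg]; ring
  have := hmax v hbp
  rw [hsum2] at hsum
  linarith

end Aux

section Main

variable {m N : ℕ}

lemma Hent_eq {z : Fin N → ℝ} : Hent z = ∑ i, Real.negMulLog |z i| := by
  rw [Hent, ← Finset.sum_neg_distrib]
  congr 1
  funext i
  rw [Real.negMulLog]
  ring

lemma Gfun_two (α : ℝ) (hα : 0 < α) (z : Fin N → ℝ) :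
    Gfun 2 α z = -Hent z - (Real.log (α ^ (2:ℝ)) + 1) * norm1 z := by
  have hc : (0:ℝ) < α ^ (2:ℝ) := Real.rpow_pos_of_pos hα 2
  set c := α ^ (2:ℝ) with hcdef
  have key : ∀ i, c * gfun 2 (z i / c) =
      |z i| * Real.log |z i| - (Real.log c + 1) * |z i| := by
    intro i
    rw [gfun]
    rw [if_pos rfl]
    rcases eq_or_ne (z i) 0 with h | h
    · rw [h]
      simp
    · have hz0 : z i / c ≠ 0 := div_ne_zero h hc.ne'
      rw [if_neg hz0]
      have habs : |z i / c| = |z i| / c := by rw [abs_div, abs_of_pos hc]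
      rw [habs]
      have hlog : Real.log (|z i| / c / Real.exp 1) =
          Real.log |z i| - Real.log c - 1 := by
        rw [Real.log_div (div_ne_zero (abs_ne_zero.2 h) hc.ne') (Real.exp_ne_zero 1),
          Real.log_div (abs_ne_zero.2 h) hc.ne', Real.log_exp]
      rw [hlog]
      field_simp
      ring
  rw [Gfun, Finset.mul_sum]
  simp only [← hcdef, key]
  rw [Finset.sum_sub_distrib, Hent, norm1, Finset.mul_sum]
  ring

lemma Gfun_gt {p : ℝ} (hp : 2 < p) (α : ℝ) (hα : 0 < α) (z : Fin N → ℝ) :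
    Gfun p α z = norm1 z - p / 2 * (α ^ p) ^ (1 - 2 / p) * ∑ i, |z i| ^ (2 / p) := by
  have hc : (0:ℝ) < α ^ p := Real.rpow_pos_of_pos hα p
  set c := α ^ p with hcdef
  have hp2 : p ≠ 2 := ne_of_gt hp
  have key : ∀ i, c * gfun p (z i / c) =
      |z i| - p / 2 * c ^ (1 - 2/p) * |z i| ^ (2/p) := by
    intro i
    rw [gfun, if_neg hp2]
    have habs : |z i / c| = |z i| / c := by rw [abs_div, abs_of_pos hc]
    rw [habs]
    have hdivpow : (|z i| / c) ^ (2/p) = |z i| ^ (2/p) / c ^ (2/p) :=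
      Real.div_rpow (abs_nonneg _) hc.le _
    rw [hdivpow]
    have hcpow : c ^ (1 - 2/p) = c / c ^ (2/p) := by
      rw [Real.rpow_sub hc, Real.rpow_one]
    rw [hcpow]
    have hcp : c ^ (2/p) ≠ 0 := (Real.rpow_pos_of_pos hc _).ne'
    field_simp
  rw [Gfun, Finset.mul_sum]
  simp only [← hcdef, key]
  rw [Finset.sum_sub_distrib, norm1, ← Finset.mul_sum]

end Main

/-- Proposition `Wp_Gp_id`: the maximizer over 𝒰(A,y) of the
entropy H (if p = 2), resp. of ‖·‖_{2/p} (if p > 2), exists and is unique and equals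
g*, the minimizer of G_p over 𝒰(A,y); i.e. 𝒲_p(A,y) = g*. -/
theorem stmt11 (m N : ℕ) (hm : 1 ≤ m) (hmN : m < N)
    (A : Matrix (Fin m) (Fin N) ℝ) (hA : A.rank = m)
    (y : Fin m → ℝ) (p : ℝ) (hp : 2 ≤ p) (α : ℝ) (hα : 0 < α)
    (gstar : Fin N → ℝ)
    (hg1 : gstar ∈ BPset A y)
    (hg2 : ∀ z ∈ BPset A y, Gfun p α gstar ≤ Gfun p α z) :
    (p = 2 →
      (∃! w : Fin N → ℝ, w ∈ BPset A y ∧ ∀ z ∈ BPset A y, Hent z ≤ Hent w) ∧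
      ∀ z ∈ BPset A y, Hent z ≤ Hent gstar) ∧
    (2 < p →
      (∃! w : Fin N → ℝ,
          w ∈ BPset A y ∧ ∀ z ∈ BPset A y, normr (2 / p) z ≤ normr (2 / p) w) ∧
      ∀ z ∈ BPset A y, normr (2 / p) z ≤ normr (2 / p) gstar) := by
  refine ⟨fun hp2 => ?_, fun hpgt => ?_⟩
  · subst hp2
    have hHmax : ∀ z ∈ BPset A y, Hent z ≤ Hent gstar := by
      intro z hz
      have h1 := hg2 z hz
      rw [Gfun_two α hα, Gfun_two α hα] at h1
      have h2 : norm1 z = norm1 gstar := norm1_eq_of_mem hz hg1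
      rw [h2] at h1
      linarith
    refine ⟨?_, hHmax⟩
    simp only [Hent_eq] at hHmax ⊢
    exact uniq_max Real.strictConcaveOn_negMulLog hg1 hHmax
  · have hppos : (0:ℝ) < p := by linarith
    have hr0 : (0:ℝ) < 2 / p := by positivity
    have hr1 : 2 / p < 1 := (div_lt_one hppos).2 hpgt
    have hC : (0:ℝ) < p / 2 * (α ^ p) ^ (1 - 2 / p) := by
      have h := Real.rpow_pos_of_pos hα p
      positivity
    have hSmax : ∀ z ∈ BPset A y,
        (∑ i, |z i| ^ (2 / p)) ≤ ∑ i, |gstar i| ^ (2 / p) := by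
      intro z hz
      have h1 := hg2 z hz
      rw [Gfun_gt hpgt α hα, Gfun_gt hpgt α hα] at h1
      have h2 : norm1 z = norm1 gstar := norm1_eq_of_mem hz hg1
      rw [h2] at h1
      have h3 : p / 2 * (α ^ p) ^ (1 - 2 / p) * (∑ i, |z i| ^ (2 / p)) ≤
          p / 2 * (α ^ p) ^ (1 - 2 / p) * (∑ i, |gstar i| ^ (2 / p)) := by linarith
      exact le_of_mul_le_mul_left h3 hC
    have hiff : ∀ z w : Fin N → ℝ,
        (∑ i, |z i| ^ (2 / p)) ≤ (∑ i, |w i| ^ (2 / p)) ↔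
          normr (2 / p) z ≤ normr (2 / p) w := by
      intro z w
      rw [normr, normr]
      exact (Real.rpow_le_rpow_iff
        (Finset.sum_nonneg fun i _ => Real.rpow_nonneg (abs_nonneg _) _)
        (Finset.sum_nonneg fun i _ => Real.rpow_nonneg (abs_nonneg _) _)
        (by positivity)).symm
    refine ⟨?_, fun z hz => (hiff z gstar).1 (hSmax z hz)⟩
    obtain ⟨w, ⟨hw1, hw2⟩, hwu⟩ :=
      uniq_max (Real.strictConcaveOn_rpow hr0 hr1) hg1 hSmax
    exact ⟨w, ⟨hw1, fun z hz => (hiff z w).1 (hw2 z hz)⟩,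
      fun w' hw' => hwu w' ⟨hw'.1, fun z hz => (hiff z w').2 (hw'.2 z hz)⟩⟩
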